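/- arXiv:2012.12484 — 8 statements merged into one kernel-verified Lean document; each statement's English description precedes it below -/
import Mathlib

section
/- Let I and K be ideals on a set S such that I ∪ K generates a proper ideal (equivalently, S ≠ I₀ ∪ K₀ for all I₀ ∈ I, K₀ ∈ K). Then a function f : S → X into a topological space X is I^(K*)-convergent to x if and only if f is (I ∨ K)*-convergent to x, where I ∨ K denotes the ideal generated by I ∪ K. -/
def IsIdeal {S : Type*} (I : Set (Set S)) : Prop :=
  ∅ ∈ I ∧ (∀ A B : Set S, A ∈ I → B ∈ I → A ∪ B ∈ I) ∧
  (∀ A B : Set S, B ∈ I → A ⊆ B → A ∈ I) ∧ (Set.univ : Set S) ∉ I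

/-- `f` is `K`-convergent to `x`. -/
def IdealConv {S X : Type*} [TopologicalSpace X] (K : Set (Set S)) (f : S → X) (x : X) : Prop :=
  ∀ U ∈ nhds x, {s | f s ∉ U} ∈ K

open Classical in
/-- `f` is `I^K`-convergent to `x`. -/
def IKConv {S X : Type*} [TopologicalSpace X] (I K : Set (Set S)) (f : S → X) (x : X) : Prop :=
  ∃ M : Set S, Mᶜ ∈ I ∧ IdealConv K (fun s => if s ∈ M then f s else x) x

/-- The ideal generated by `I ∪ K`. -/
def GenIdeal {S : Type*} (I K : Set (Set S)) : Set (Set S) :=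
  {A | ∃ I₀ ∈ I, ∃ K₀ ∈ K, A ⊆ I₀ ∪ K₀}

/-- The ideality condition: `I ∪ K` generates a proper ideal. -/
def IdealityCond {S : Type*} (I K : Set (Set S)) : Prop :=
  ∀ I₀ ∈ I, ∀ K₀ ∈ K, I₀ ∪ K₀ ≠ Set.univ

open Classical in
/-- `f` is `J*`-convergent to `x` (for the ideal `J`). -/
def StarConv {S X : Type*} [TopologicalSpace X] (J : Set (Set S)) (f : S → X) (x : X) : Prop :=
  ∃ N : Set S, Nᶜ ∈ J ∧ ∀ U ∈ nhds x, {s | (if s ∈ N then f s else x) ∉ U}.Finite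

open Classical in
/-- `f` is `I^(K*)`-convergent to `x`. -/
def IKStarConv {S X : Type*} [TopologicalSpace X] (I K : Set (Set S)) (f : S → X) (x : X) : Prop :=
  ∃ M : Set S, Mᶜ ∈ I ∧ StarConv K (fun s => if s ∈ M then f s else x) x

theorem ikstar_iff_genstar {S X : Type*} [TopologicalSpace X]
    (I K : Set (Set S)) (hI : IsIdeal I) (hK : IsIdeal K)
    (hIK : IdealityCond I K) (f : S → X) (x : X) :
    IKStarConv I K f x ↔ StarConv (GenIdeal I K) f x := by
  classical
  constructor
  · rintro ⟨M, hM, N, hN, hconv⟩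
    refine ⟨M ∩ N, ?_, ?_⟩
    · exact ⟨Mᶜ, hM, Nᶜ, hN, by rw [Set.compl_inter]⟩
    · intro U hU
      refine (hconv U hU).subset ?_
      intro s hs
      simp only [Set.mem_setOf_eq, Set.mem_inter_iff] at *
      by_cases h1 : s ∈ M <;> by_cases h2 : s ∈ N <;> simp_all
  · rintro ⟨P, ⟨I₀, hI₀, K₀, hK₀, hsub⟩, hconv⟩
    refine ⟨I₀ᶜ, by simpa using hI₀, K₀ᶜ ∪ P, ?_, ?_⟩
    · have : (K₀ᶜ ∪ P)ᶜ ⊆ K₀ := by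
        rw [Set.compl_union, compl_compl]
        exact Set.inter_subset_left
      exact hK.2.2.1 _ _ hK₀ this
    · intro U hU
      have hxU : x ∈ U := mem_of_mem_nhds hU
      refine (hconv U hU).subset ?_
      intro s hs
      simp only [Set.mem_setOf_eq] at *
      by_cases hN : s ∈ K₀ᶜ ∪ P
      · simp only [if_pos hN] at hs
        by_cases hM : s ∈ I₀ᶜ
        · simp only [if_pos hM] at hs
          have hP : s ∈ P := by
            rcases hN with h | h
            · by_contra hsP
              have : s ∈ I₀ ∪ K₀ := hsub hsP
              rcases this with h' | h'
              · exact hM h'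
              · exact h h'
            · exact h
          simpa [if_pos hP] using hs
        · simp only [if_neg hM] at hs; exact absurd hxU hs
      · simp only [if_neg hN] at hs; exact absurd hxU hs
end

section
/- Let I and K be ideals on a set S such that the union I ∪ K generates a proper ideal I ∨ K. If f : S → X is I^K-convergent to x, then f is (I ∨ K)-convergent to x, i.e., for every neighborhood U of x, {s : f(s) ∉ U} belongs to the ideal generated by I ∪ K. -/
theorem ikconv_implies_genconv {S X : Type*} [TopologicalSpace X]
    (I K : Set (Set S)) (hI : IsIdeal I) (hK : IsIdeal K)
    (hIK : IdealityCond I K) (f : S → X) (x : X)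
    (h : IKConv I K f x) :
    IdealConv (GenIdeal I K) f x := by
  classical
  obtain ⟨M, hM, hg⟩ := h
  intro U hU
  refine ⟨Mᶜ, hM, {s | (if s ∈ M then f s else x) ∉ U} , hg U hU, ?_⟩
  intro s hs
  by_cases hsM : s ∈ M
  · right; simpa [hsM] using hs
  · left; exact hsM
end

section
/- Let I, K be ideals on S satisfying the ideality condition (S ≠ I₀ ∪ K₀ for all I₀ ∈ I, K₀ ∈ K), let J ∈ I, and let J be the ideal generated by K ∪ {J} (i.e., sets contained in K₀ ∪ J for some K₀ ∈ K). If f : S → X is J-convergent to x, then f is I^K-convergent to x. -/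
theorem jconv_implies_ikconv {S X : Type*} [TopologicalSpace X]
    (I K : Set (Set S)) (hI : IsIdeal I) (hK : IsIdeal K)
    (hIK : IdealityCond I K) (J₀ : Set S) (hJ₀ : J₀ ∈ I)
    (f : S → X) (x : X)
    (h : IdealConv {A | ∃ K₀ ∈ K, A ⊆ K₀ ∪ J₀} f x) :
    IKConv I K f x := by
  refine ⟨J₀ᶜ, by simpa using hJ₀, fun U hU => ?_⟩
  obtain ⟨K₀, hK₀, hsub⟩ := h U hU
  refine hK.2.2.1 _ K₀ hK₀ fun s hs => ?_
  simp only [Set.mem_setOf_eq] at hs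
  by_cases hsJ : s ∈ J₀ᶜ
  · rw [if_pos hsJ] at hs
    rcases hsub hs with h1 | h1
    · exact h1
    · exact absurd h1 hsJ
  · rw [if_neg hsJ] at hs
    exact absurd (mem_of_mem_nhds hU) hs
end

section
/- Let X be a Hausdorff topological space and let I, K be ideals on S such that I ∪ K generates a proper ideal. Then every function f : S → X has at most one I^K-limit. -/
theorem ikconv_limit_unique {S X : Type*} [TopologicalSpace X] [T2Space X]
    (I K : Set (Set S)) (hI : IsIdeal I) (hK : IsIdeal K)
    (hIK : IdealityCond I K) (f : S → X) (x y : X)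
    (hx : IKConv I K f x) (hy : IKConv I K f y) :
    x = y := by
  classical
  by_contra hne
  obtain ⟨U, V, hU, hV, hxU, hyV, hUV⟩ := t2_separation hne
  obtain ⟨M, hMc, hMconv⟩ := hx
  obtain ⟨N, hNc, hNconv⟩ := hy
  have hA := hMconv U (hU.mem_nhds hxU)
  have hB := hNconv V (hV.mem_nhds hyV)
  apply hIK (Mᶜ ∪ Nᶜ) (hI.2.1 _ _ hMc hNc)
    ({s | (if s ∈ M then f s else x) ∉ U} ∪ {s | (if s ∈ N then f s else y) ∉ V})
    (hK.2.1 _ _ hA hB)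
  ext s
  simp only [Set.mem_union, Set.mem_compl_iff, Set.mem_setOf_eq, Set.mem_univ, iff_true]
  by_cases hM : s ∈ M
  · by_cases hN : s ∈ N
    · simp only [hM, hN, if_pos]
      by_cases hfU : f s ∈ U
      · right; right
        exact fun hfV => Set.disjoint_left.mp hUV hfU hfV
      · right; left; exact hfU
    · left; right; exact hN
  · left; left; exact hM
end

section
/- Let X be a Hausdorff space, I and K ideals on S with I ∪ K generating a proper ideal, and f : S → X a function that is I^K-convergent to some point. Then there exists an ideal J on S such that for all x ∈ X, f is I^K-convergent to x if and only if f is J-convergent to x. -/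
theorem exists_ideal_equiv_ikconv {S X : Type*} [TopologicalSpace X] [T2Space X]
    (I K : Set (Set S)) (hI : IsIdeal I) (hK : IsIdeal K)
    (hIK : IdealityCond I K) (f : S → X)
    (hf : ∃ x₀ : X, IKConv I K f x₀) :
    ∃ J : Set (Set S), IsIdeal J ∧ ∀ x : X, (IKConv I K f x ↔ IdealConv J f x) := by
  classical
  obtain ⟨x₀, M, hMc, hconv⟩ := hf
  obtain ⟨hKemp, hKun, hKdown, _⟩ := hK
  -- J: ideal generated by K ∪ {Mᶜ}
  refine ⟨{A | ∃ K₀ ∈ K, A ⊆ K₀ ∪ Mᶜ}, ⟨⟨∅, hKemp, by simp⟩, ?_, ?_, ?_⟩, ?_⟩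
  · rintro A B ⟨KA, hKA, hA⟩ ⟨KB, hKB, hB⟩
    exact ⟨KA ∪ KB, hKun _ _ hKA hKB, by
      intro s hs; rcases hs with h | h
      · rcases hA h with h' | h'; exacts [Or.inl (Or.inl h'), Or.inr h']
      · rcases hB h with h' | h'; exacts [Or.inl (Or.inr h'), Or.inr h']⟩
  · rintro A B ⟨KB, hKB, hB⟩ hAB
    exact ⟨KB, hKB, hAB.trans hB⟩
  · rintro ⟨K₀, hK₀, hsub⟩
    exact hIK Mᶜ hMc K₀ hK₀ (by rw [Set.union_comm]; exact Set.eq_univ_of_univ_subset hsub)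
  -- uniqueness of IK-limits
  have huniq : ∀ x : X, IKConv I K f x → x = x₀ := by
    intro x ⟨M', hM'c, hconv'⟩
    by_contra hne
    obtain ⟨U, V, hU, hV, hxU, hxV, hUV⟩ := t2_separation hne
    have hA := hconv' U (hU.mem_nhds hxU)
    have hB := hconv V (hV.mem_nhds hxV)
    refine hIK (Mᶜ ∪ M'ᶜ) (hI.2.1 _ _ hMc hM'c) _ (hKun _ _ hA hB) ?_
    apply Set.eq_univ_of_forall
    intro s
    by_cases hsM : s ∈ M
    · by_cases hsM' : s ∈ M'
      · by_cases hfU : f s ∈ U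
        · refine Or.inr (Or.inr ?_)
          simp only [Set.mem_setOf_eq, if_pos hsM]
          exact fun hfV => Set.disjoint_left.mp hUV hfU hfV
        · exact Or.inr (Or.inl (by simp [Set.mem_setOf_eq, if_pos hsM', hfU]))
      · exact Or.inl (Or.inr hsM')
    · exact Or.inl (Or.inl hsM)
  intro x
  constructor
  · intro hx
    have hx0 : x = x₀ := huniq x hx
    subst hx0
    intro U hU
    have hKU := hconv U hU
    refine ⟨_, hKU, ?_⟩
    intro s hs
    by_cases hsM : s ∈ M
    · exact Or.inl (by simpa [Set.mem_setOf_eq, if_pos hsM] using hs)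
    · exact Or.inr hsM
  · intro hx
    refine ⟨M, hMc, ?_⟩
    intro U hU
    obtain ⟨K₀, hK₀, hsub⟩ := hx U hU
    refine hKdown _ K₀ hK₀ ?_
    intro s hs
    simp only [Set.mem_setOf_eq] at hs
    by_cases hsM : s ∈ M
    · rw [if_pos hsM] at hs
      rcases hsub hs with h | h
      · exact h
      · exact absurd hsM h
    · rw [if_neg hsM] at hs
      exact absurd (mem_of_mem_nhds hU) hs
end

section
/- Every first countable topological space X is an I^K-sequential space, for any ideals I, K on ω containing all finite sets: every I^K-open subset of X is open. -/
/-- A set `O` is `I^K`-open if no sequence in its complement is `I^K`-convergent to a point of `O`. -/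
def IKOpen {X : Type*} [TopologicalSpace X] (I K : Set (Set ℕ)) (O : Set X) : Prop :=
  ∀ x : ℕ → X, (∀ n, x n ∉ O) → ∀ y ∈ O, ¬ IKConv I K x y

/-- An ideal contains all finite sets. -/
def ContainsFin (I : Set (Set ℕ)) : Prop := ∀ A : Set ℕ, A.Finite → A ∈ I


theorem firstCountable_ik_sequential {X : Type*} [TopologicalSpace X]
    [FirstCountableTopology X]
    (I K : Set (Set ℕ)) (hI : IsIdeal I) (hK : IsIdeal K)
    (hIfin : ContainsFin I) (hKfin : ContainsFin K)
    (O : Set X) (hO : IKOpen I K O) :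
    IsOpen O := by
  by_contra hnot
  -- there is y ∈ O with every neighborhood of y meeting Oᶜ
  rw [← isClosed_compl_iff, ← closure_eq_iff_isClosed] at hnot
  have hsub : Oᶜ ⊆ closure Oᶜ := subset_closure
  have : ∃ y, y ∈ closure Oᶜ ∧ y ∈ O := by
    by_contra h
    push_neg at h
    exact hnot (Set.Subset.antisymm (fun z hz => by
      by_contra hzO
      exact (h z hz) (not_not.mp hzO)) hsub)
  obtain ⟨y, hy, hyO⟩ := this
  obtain ⟨b, hb⟩ := (nhds y).exists_antitone_basis
  -- choose x n ∈ b n \ O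
  have hchoice : ∀ n : ℕ, ∃ z, z ∈ b n ∧ z ∉ O := by
    intro n
    have hb' : b n ∈ nhds y := hb.mem n
    have := mem_closure_iff_nhds.mp hy (b n) hb'
    obtain ⟨z, hz1, hz2⟩ := this
    exact ⟨z, hz1, hz2⟩
  choose x hx1 hx2 using hchoice
  apply hO x hx2 y hyO
  refine ⟨Set.univ, by simpa using hI.1, ?_⟩
  intro U hU
  simp only [Set.mem_univ, if_true]
  obtain ⟨N, hN⟩ := hb.toHasBasis.mem_iff.mp hU
  have : {s : ℕ | x s ∉ U} ⊆ Set.Iio N := by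
    intro s hs
    by_contra hsN
    simp only [Set.mem_Iio, not_lt] at hsN
    exact hs (hN.2 (hb.antitone hsN (hx1 s)))
  exact hK.2.2.1 _ _ (hKfin _ (Set.finite_Iio N)) this
end

section
/- Let X be an I^K-sequential space and Y an I^K-closed subspace of X. Then Y with the subspace topology is I^K-sequential. -/
theorem ik_closed_subspace_ik_sequential {X : Type*} [TopologicalSpace X]
    (I K : Set (Set ℕ)) (hI : IsIdeal I) (hK : IsIdeal K)
    (hIfin : ContainsFin I) (hKfin : ContainsFin K)
    (hX : ∀ O : Set X, IKOpen I K O → IsOpen O)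
    (Y : Set X) (hY : IKOpen I K Yᶜ)
    (O : Set Y) (hO : IKOpen I K O) :
    IsOpen O := by
  classical
  set A : Set X := (Subtype.val '' O) ∪ Yᶜ with hA
  have hAopen : IKOpen I K A := by
    intro x hx y hy hconv
    have hxY : ∀ n, x n ∈ Y := by
      intro n
      by_contra h
      exact hx n (Or.inr h)
    rcases hy with hy | hy
    · obtain ⟨yy, hyyO, rfl⟩ := hy
      obtain ⟨M, hM, hconvK⟩ := hconv
      set x' : ℕ → Y := fun n => ⟨x n, hxY n⟩ with hx'
      apply hO x' (fun n h => hx n (Or.inl ⟨x' n, h, rfl⟩)) yy hyyO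
      refine ⟨M, hM, ?_⟩
      intro U hU
      rw [nhds_induced] at hU
      obtain ⟨V, hV, hVU⟩ := hU
      refine hK.2.2.1 _ _ (hconvK V hV) ?_
      intro s hs
      simp only [Set.mem_setOf_eq] at hs ⊢
      intro h
      apply hs
      apply hVU
      have : ((if s ∈ M then x' s else yy) : X) = if s ∈ M then x s else (yy : X) := by
        by_cases hsM : s ∈ M <;> simp [hsM, hx']
      rw [Set.mem_preimage, apply_ite Subtype.val, this]
      exact h
    · exact hY x (fun n h => h (hxY n)) y hy hconv
  have hOA : O = Subtype.val ⁻¹' A := by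
    ext z
    constructor
    · intro h; exact Or.inl ⟨z, h, rfl⟩
    · rintro (⟨w, hw, hwz⟩ | h)
      · rwa [Subtype.ext hwz] at hw
      · exact absurd z.2 h
  rw [hOA]
  exact (hX A hAopen).preimage continuous_subtype_val
end

section
/- Let I, K be ideals on ω and X a topological space. For every sequence x = (x_n) in X, the set C_x(I^K) of all I^K-cluster points of x is closed in X. -/
/-- `y` is a `K`-cluster point of `f`. -/
def IdealClusterPt {S X : Type*} [TopologicalSpace X] (K : Set (Set S)) (f : S → X) (y : X) : Prop :=
  ∀ U ∈ nhds y, {s | f s ∈ U} ∉ K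

open Classical in
/-- `y` is an `I^K`-cluster point of `f`. -/
def IKClusterPt {S X : Type*} [TopologicalSpace X] (I K : Set (Set S)) (f : S → X) (y : X) : Prop :=
  ∃ M : Set S, Mᶜ ∈ I ∧ IdealClusterPt K (fun s => if s ∈ M then f s else y) y


theorem ik_clusterPts_closed {X : Type*} [TopologicalSpace X]
    (I K : Set (Set ℕ)) (hI : IsIdeal I) (hK : IsIdeal K)
    (x : ℕ → X) :
    IsClosed {y : X | IKClusterPt I K x y} := by
  classical
  obtain ⟨hIemp, hIun, hIdown, hIuniv⟩ := hI
  obtain ⟨hKemp, hKun, hKdown, hKuniv⟩ := hK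
  by_cases hcase : ∃ A ∈ I, A ∉ K
  · obtain ⟨A, hAI, hAK⟩ := hcase
    have huniv : {y : X | IKClusterPt I K x y} = Set.univ := by
      ext y
      simp only [Set.mem_univ, iff_true, Set.mem_setOf_eq]
      refine ⟨Aᶜ, by simpa using hAI, ?_⟩
      intro U hU hmem
      refine hAK (hKdown A _ hmem ?_)
      intro s hs
      simp only [Set.mem_setOf_eq, Set.mem_compl_iff, hs, not_true, if_neg, not_false_iff]
      simpa [hs] using mem_of_mem_nhds hU
    rw [huniv]; exact isClosed_univ
  · push_neg at hcase
    have key : {y : X | IKClusterPt I K x y} = {y : X | IdealClusterPt K x y} := by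
      ext y
      simp only [Set.mem_setOf_eq]
      constructor
      · rintro ⟨M, hMI, hM⟩ U hU hxU
        refine hM U hU (hKdown _ ({s | x s ∈ U} ∪ Mᶜ) (hKun _ _ hxU (hcase _ hMI)) ?_)
        intro s hs
        simp only [Set.mem_setOf_eq] at hs
        by_cases hsM : s ∈ M
        · left; simpa [hsM] using hs
        · right; exact hsM
      · intro h
        refine ⟨Set.univ, by simpa using hIemp, ?_⟩
        intro U hU
        simpa using h U hU
    rw [key]
    refine isClosed_of_closure_subset ?_
    intro y hy U hU hxU
    obtain ⟨U₀, hU₀U, hU₀open, hyU₀⟩ := mem_nhds_iff.mp hU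
    obtain ⟨z, hzU₀, hz⟩ := mem_closure_iff.mp hy U₀ hU₀open hyU₀
    exact hz U₀ (hU₀open.mem_nhds hzU₀) (hKdown _ _ hxU (fun s hs => hU₀U hs))
end
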